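/- There exist a constant C > 0 and a natural number N such that the following holds: for every natural number n ≥ N and every real ε with 0 < ε < 1, setting k = ⌊√n⌋, letting K be the subtype {S : Finset (Fin n) // S.card = k}, M : Matrix K K ℝ the disjointness matrix, D = C(n,k) · C(n−k,k), and M̂ = (1/√D) • M the normalization of M to unit Frobenius norm, there exists a symmetric matrix M' : Matrix K K ℝ whose rank satisfies (M'.rank : ℝ) ≤ (n : ℝ)^(C · Real.log (1/ε)) and such that trace((M̂ − M')ᵀ * (M̂ − M')) ≤ 2ε. -/

import Mathlib

/-- The disjointness (Kneser) matrix on `k`-element subsets of `Fin n`. -/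
def disjMatrix (n k : ℕ) :
    Matrix {S : Finset (Fin n) // S.card = k} {S : Finset (Fin n) // S.card = k} ℝ :=
  Matrix.of fun S T => if Disjoint S.1 T.1 then 1 else 0

/-- The disjointness matrix normalized to unit Frobenius norm:
`M̂ = (1/√D) • M` with `D = C(n,k) · C(n−k,k)`. -/
noncomputable def disjMatrixNormalized (n k : ℕ) :
    Matrix {S : Finset (Fin n) // S.card = k} {S : Finset (Fin n) // S.card = k} ℝ :=
  ((1 : ℝ) / Real.sqrt ((n.choose k * (n - k).choose k : ℕ))) • disjMatrix n k

namespace LowRankDisjAux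
open Finset Matrix
lemma alt_sum_zero (t : ℕ) :
    ∑ j ∈ Finset.range (t + 1), (-1 : ℝ) ^ j * (Nat.choose 0 j : ℝ) = 1 := by
  induction t with
  | zero => simp
  | succ t ih => rw [Finset.sum_range_succ, ih]; simp

lemma alt_sum_succ (t m : ℕ) :
    ∑ j ∈ Finset.range (t + 1), (-1 : ℝ) ^ j * ((m + 1).choose j : ℝ)
      = (-1) ^ t * (m.choose t : ℝ) := by
  induction t with
  | zero => simp
  | succ t ih =>
      rw [Finset.sum_range_succ, ih, Nat.choose_succ_succ]
      push_cast
      ring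

lemma pow16_le_factorial {m : ℕ} (h : 16 ≤ m) : 16 ^ (m - 16) ≤ m.factorial := by
  induction m with
  | zero => omega
  | succ m ih =>
      rcases Nat.lt_or_ge m 16 with h' | h'
      · have e : m + 1 - 16 = 0 := by omega
        rw [e, pow_zero]
        exact Nat.one_le_iff_ne_zero.mpr (Nat.factorial_ne_zero _)
      · have e : m + 1 - 16 = (m - 16) + 1 := by omega
        rw [e, pow_succ, Nat.factorial_succ, Nat.mul_comm (m + 1)]
        exact Nat.mul_le_mul (ih h') (by omega)

lemma choose_ratio {a k : ℕ} (hk : k ≤ a) :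
    ∀ m, m ≤ k → a.choose (k - m) * (a - k + 1) ^ m ≤ a.choose k * k ^ m := by
  intro m
  induction m with
  | zero => simp
  | succ m ih =>
      intro hm
      have hm' : m ≤ k := by omega
      set b := k - m with hb
      have hb1 : 1 ≤ b := by omega
      have hb' : b - 1 + 1 = b := by omega
      have h2 := Nat.choose_succ_right_eq a (b - 1)
      rw [hb'] at h2
      have key : a.choose (b - 1) * (a - k + 1) ≤ a.choose b * k := by
        calc a.choose (b - 1) * (a - k + 1)
            ≤ a.choose (b - 1) * (a - (b - 1)) :=
              Nat.mul_le_mul_left _ (by omega)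
          _ = a.choose b * b := h2.symm
          _ ≤ a.choose b * k := Nat.mul_le_mul_left _ (by omega)
      have hkb : k - (m + 1) = b - 1 := by omega
      rw [hkb]
      calc a.choose (b - 1) * (a - k + 1) ^ (m + 1)
          = (a.choose (b - 1) * (a - k + 1)) * (a - k + 1) ^ m := by rw [pow_succ]; ring
        _ ≤ (a.choose b * k) * (a - k + 1) ^ m := Nat.mul_le_mul_right _ key
        _ = k * (a.choose (k - m) * (a - k + 1) ^ m) := by rw [← hb]; ring
        _ ≤ k * (a.choose k * k ^ m) := Nat.mul_le_mul_left _ (ih hm')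
        _ = a.choose k * k ^ (m + 1) := by rw [pow_succ]; ring

lemma choose_mul_factorial_le (k m : ℕ) : k.choose m * m.factorial ≤ k ^ m := by
  rw [Nat.mul_comm, ← Nat.descFactorial_eq_factorial_mul_choose]
  exact Nat.descFactorial_le_pow k m

lemma choose_le_two_pow (m t : ℕ) : m.choose t ≤ 2 ^ m := by
  rcases le_or_gt t m with h | h
  · calc m.choose t ≤ ∑ j ∈ Finset.range (m + 1), m.choose j :=
        Finset.single_le_sum (fun j _ => Nat.zero_le _) (Finset.mem_range.mpr (by omega))
      _ = 2 ^ m := Nat.sum_range_choose m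
  · rw [Nat.choose_eq_zero_of_lt h]; exact Nat.zero_le _

lemma core_nat {n k t m : ℕ} (hkk : k * k ≤ n) (hk4 : 4 ≤ k)
    (hmk : m ≤ k) (htm : t + 1 ≤ m) (ht16 : 16 ≤ t) :
    k.choose m * (n - k).choose (k - m) * ((m - 1).choose t) ^ 2 * 2 ^ m
      ≤ (n - k).choose k * 2 ^ 64 := by
  have h4k : 4 * k ≤ n := le_trans (Nat.mul_le_mul_right k hk4) hkk
  have hka : k ≤ n - k := by omega
  set a := n - k with ha
  set q := a - k + 1 with hq
  have hq8 : 8 * n ≤ 16 * q := by omega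
  have hm16 : 16 ≤ m := by omega
  have hP : 0 < q ^ m * m.factorial :=
    Nat.mul_pos (pow_pos (by omega) m) m.factorial_pos
  refine Nat.le_of_mul_le_mul_right ?_ hP
  have h16 : (16 : ℕ) ^ m = 2 ^ 64 * 16 ^ (m - 16) := by
    have : (16 : ℕ) ^ 16 = 2 ^ 64 := by norm_num
    rw [← this, ← pow_add]
    congr 1
    omega
  have h8 : (8 * (k * k)) ^ m = k ^ m * k ^ m * (2 ^ m * 2 ^ m * 2 ^ m) := by
    have : (8 : ℕ) * (k * k) = 2 * 2 * 2 * (k * k) := by norm_num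
    rw [this, mul_pow, mul_pow, mul_pow, mul_pow]
    ring
  calc k.choose m * a.choose (k - m) * ((m - 1).choose t) ^ 2 * 2 ^ m * (q ^ m * m.factorial)
      = (k.choose m * m.factorial) * (a.choose (k - m) * q ^ m)
          * (((m - 1).choose t) ^ 2 * 2 ^ m) := by ring
    _ ≤ (k ^ m) * (a.choose k * k ^ m) * ((2 ^ m) ^ 2 * 2 ^ m) := by
        refine Nat.mul_le_mul (Nat.mul_le_mul ?_ ?_) ?_
        · exact choose_mul_factorial_le k m
        · exact choose_ratio hka m hmk
        · refine Nat.mul_le_mul_right _ (Nat.pow_le_pow_left ?_ 2)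
          exact le_trans (choose_le_two_pow _ _) (Nat.pow_le_pow_right (by norm_num) (by omega))
    _ = a.choose k * ((8 * (k * k)) ^ m) := by rw [h8]; ring
    _ ≤ a.choose k * ((8 * n) ^ m) :=
        Nat.mul_le_mul_left _ (Nat.pow_le_pow_left (Nat.mul_le_mul_left 8 hkk) m)
    _ ≤ a.choose k * ((16 * q) ^ m) :=
        Nat.mul_le_mul_left _ (Nat.pow_le_pow_left hq8 m)
    _ = a.choose k * (2 ^ 64 * 16 ^ (m - 16)) * q ^ m := by rw [mul_pow, h16]; ring
    _ ≤ a.choose k * (2 ^ 64 * m.factorial) * q ^ m := by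
        refine Nat.mul_le_mul_right _ (Nat.mul_le_mul_left _ (Nat.mul_le_mul_left _ ?_))
        exact pow16_le_factorial hm16
    _ = a.choose k * 2 ^ 64 * (q ^ m * m.factorial) := by ring

lemma geom_tail_eq (t : ℕ) : ∀ N, t + 1 ≤ N →
    ∑ m ∈ Finset.Ico (t + 1) N, ((1 : ℝ) / 2) ^ m = (1 / 2) ^ t - 2 * (1 / 2) ^ N := by
  intro N hN
  induction N, hN using Nat.le_induction with
  | base => rw [Finset.Ico_self, Finset.sum_empty, pow_succ]; ring
  | succ N hN ih => rw [Finset.sum_Ico_succ_top hN, ih, pow_succ]; ring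

lemma tail_sum (N t : ℕ) :
    ∑ m ∈ Finset.range N, (if m ≤ t then (0 : ℝ) else (1 / 2) ^ m) ≤ (1 / 2) ^ t := by
  have hsub : Finset.Ico (t + 1) N ⊆ Finset.range N := by
    intro x hx
    rw [Finset.mem_range]
    exact (Finset.mem_Ico.mp hx).2
  have h0 : ∀ x ∈ Finset.range N, x ∉ Finset.Ico (t + 1) N →
      (if x ≤ t then (0 : ℝ) else (1 / 2) ^ x) = 0 := by
    intro x hx hnx
    rw [Finset.mem_range] at hx
    rw [Finset.mem_Ico] at hnx
    have : x ≤ t := by omega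
    simp [this]
  rw [← Finset.sum_subset hsub h0]
  have hcong : ∑ m ∈ Finset.Ico (t + 1) N, (if m ≤ t then (0 : ℝ) else (1 / 2) ^ m)
      = ∑ m ∈ Finset.Ico (t + 1) N, ((1 : ℝ) / 2) ^ m := by
    refine Finset.sum_congr rfl fun m hm => ?_
    rw [Finset.mem_Ico] at hm
    have : ¬ m ≤ t := by omega
    simp [this]
  rw [hcong]
  rcases le_or_gt (t + 1) N with h | h
  · rw [geom_tail_eq t N h]
    have : (0 : ℝ) ≤ 2 * (1 / 2) ^ N := by positivity
    linarith
  · rw [Finset.Ico_eq_empty (by omega), Finset.sum_empty]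
    positivity

lemma count_inter {n k m : ℕ} (S : Finset (Fin n)) (hS : S.card = k) (hm : m ≤ k) :
    (Finset.univ.filter fun T : Finset (Fin n) => T.card = k ∧ (S ∩ T).card = m).card
      = k.choose m * (n - k).choose (k - m) := by
  have hcompl : Sᶜ.card = n - k := by
    rw [Finset.card_compl, hS, Fintype.card_fin]
  have hrhs : k.choose m * (n - k).choose (k - m)
      = (S.powersetCard m ×ˢ Sᶜ.powersetCard (k - m)).card := by
    rw [Finset.card_product, Finset.card_powersetCard, Finset.card_powersetCard, hS, hcompl]
  rw [hrhs]
  apply Finset.card_bij' (fun T _ => (T ∩ S, T \ S)) (fun p _ => p.1 ∪ p.2)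
  · intro T hT
    simp only [Finset.mem_filter, Finset.mem_univ, true_and] at hT
    obtain ⟨hTk, hTm⟩ := hT
    have hinter : (T ∩ S).card = m := by rw [Finset.inter_comm]; exact hTm
    have hcards := Finset.card_inter_add_card_sdiff T S
    simp only [Finset.mem_product, Finset.mem_powersetCard]
    refine ⟨⟨Finset.inter_subset_right, hinter⟩, ?_, by omega⟩
    · intro x hx
      rw [Finset.mem_sdiff] at hx
      rw [Finset.mem_compl]
      exact hx.2
  · intro p hp
    simp only [Finset.mem_product, Finset.mem_powersetCard] at hp
    obtain ⟨⟨hA, hAm⟩, hB, hBm⟩ := hp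
    have hdisj : Disjoint p.1 p.2 := by
      rw [Finset.disjoint_left]
      intro x hx1 hx2
      exact (Finset.mem_compl.mp (hB hx2)) (hA hx1)
    have hSB : S ∩ p.2 = ∅ := by
      ext x
      simp only [Finset.mem_inter, Finset.notMem_empty, iff_false, not_and]
      intro hxS hxB
      exact (Finset.mem_compl.mp (hB hxB)) hxS
    have hSA : S ∩ p.1 = p.1 := Finset.inter_eq_right.mpr hA
    simp only [Finset.mem_filter, Finset.mem_univ, true_and]
    constructor
    · rw [Finset.card_union_of_disjoint hdisj, hAm, hBm]
      omega
    · rw [Finset.inter_union_distrib_left, hSA, hSB, Finset.union_empty]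
      exact hAm
  · intro T hT
    ext x
    simp only [Finset.mem_union, Finset.mem_inter, Finset.mem_sdiff]
    tauto
  · intro p hp
    simp only [Finset.mem_product, Finset.mem_powersetCard] at hp
    obtain ⟨⟨hA, hAm⟩, hB, hBm⟩ := hp
    have h1 : (p.1 ∪ p.2) ∩ S = p.1 := by
      ext x
      simp only [Finset.mem_inter, Finset.mem_union]
      constructor
      · rintro ⟨hx1 | hx2, hxS⟩
        · exact hx1
        · exact absurd hxS (Finset.mem_compl.mp (hB hx2))
      · intro hx
        exact ⟨Or.inl hx, hA hx⟩
    have h2 : (p.1 ∪ p.2) \ S = p.2 := by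
      ext x
      simp only [Finset.mem_sdiff, Finset.mem_union]
      constructor
      · rintro ⟨hx1 | hx2, hxS⟩
        · exact absurd (hA hx1) hxS
        · exact hx2
      · intro hx
        exact ⟨Or.inr hx, Finset.mem_compl.mp (hB hx)⟩
    rw [Prod.ext_iff]
    exact ⟨h1, h2⟩

lemma row_sum {n k : ℕ} (W : Finset (Fin n)) (hW : W.card = k) (f : ℕ → ℝ) :
    ∑ S : {S : Finset (Fin n) // S.card = k}, f ((W ∩ S.1).card)
      = ∑ m ∈ Finset.range (k + 1), ((k.choose m * (n - k).choose (k - m) : ℕ) : ℝ) * f m := by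
  classical
  have hsub : ∑ S : {S : Finset (Fin n) // S.card = k}, f ((W ∩ S.1).card)
      = ∑ S ∈ (Finset.univ.filter fun S : Finset (Fin n) => S.card = k),
          f ((W ∩ S).card) :=
    (Finset.sum_subtype (p := fun S : Finset (Fin n) => S.card = k)
      (Finset.univ.filter fun S : Finset (Fin n) => S.card = k)
      (by simp) (fun S => f ((W ∩ S).card))).symm
  rw [hsub]
  have hmaps : ∀ S ∈ (Finset.univ.filter fun S : Finset (Fin n) => S.card = k),
      (W ∩ S).card ∈ Finset.range (k + 1) := by
    intro S hS
    rw [Finset.mem_range]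
    have : (W ∩ S).card ≤ W.card := Finset.card_le_card Finset.inter_subset_left
    omega
  rw [← Finset.sum_fiberwise_of_maps_to hmaps (fun S => f ((W ∩ S).card))]
  refine Finset.sum_congr rfl fun m hm => ?_
  rw [Finset.mem_range] at hm
  have hinner : ∀ S ∈ (Finset.univ.filter fun S : Finset (Fin n) => S.card = k).filter
      (fun S => (W ∩ S).card = m), f ((W ∩ S).card) = f m := by
    intro S hS
    rw [Finset.mem_filter] at hS
    rw [hS.2]
  rw [Finset.sum_congr rfl hinner, Finset.sum_const, Finset.filter_filter]
  rw [count_inter W hW (by omega)]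
  rw [nsmul_eq_mul]

lemma trace_formula {n k : ℕ}
    (E : Matrix {S : Finset (Fin n) // S.card = k} {S : Finset (Fin n) // S.card = k} ℝ)
    (f : ℕ → ℝ) (hE : ∀ S T, (E S T) ^ 2 = f ((S.1 ∩ T.1).card)) :
    (Eᵀ * E).trace = (n.choose k : ℝ) *
      ∑ m ∈ Finset.range (k + 1), ((k.choose m * (n - k).choose (k - m) : ℕ) : ℝ) * f m := by
  classical
  have h1 : (Eᵀ * E).trace = ∑ T : {S : Finset (Fin n) // S.card = k},
      ∑ S : {S : Finset (Fin n) // S.card = k}, f ((T.1 ∩ S.1).card) := by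
    rw [Matrix.trace]
    refine Finset.sum_congr rfl fun T _ => ?_
    rw [Matrix.diag_apply, Matrix.mul_apply]
    refine Finset.sum_congr rfl fun S _ => ?_
    rw [Matrix.transpose_apply, ← pow_two, hE, Finset.inter_comm]
  rw [h1]
  have h2 : ∀ T : {S : Finset (Fin n) // S.card = k},
      ∑ S : {S : Finset (Fin n) // S.card = k}, f ((T.1 ∩ S.1).card)
        = ∑ m ∈ Finset.range (k + 1),
            ((k.choose m * (n - k).choose (k - m) : ℕ) : ℝ) * f m :=
    fun T => row_sum T.1 T.2 f
  rw [Finset.sum_congr rfl fun T _ => h2 T, Finset.sum_const, Finset.card_univ,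
    Fintype.card_finset_len, Fintype.card_fin, nsmul_eq_mul]

lemma matrix_rank_add_le {α β : Type*} [Fintype α] [Fintype β]
    (A B : Matrix α β ℝ) : (A + B).rank ≤ A.rank + B.rank := by
  classical
  rw [Matrix.rank, Matrix.rank, Matrix.rank, Matrix.mulVecLin_add]
  have hle : LinearMap.range (A.mulVecLin + B.mulVecLin) ≤
      LinearMap.range A.mulVecLin ⊔ LinearMap.range B.mulVecLin := by
    rintro x ⟨y, rfl⟩
    exact Submodule.mem_sup.2 ⟨A.mulVecLin y, ⟨y, rfl⟩, B.mulVecLin y, ⟨y, rfl⟩, rfl⟩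
  calc Module.finrank ℝ (LinearMap.range (A.mulVecLin + B.mulVecLin))
      ≤ Module.finrank ℝ
        (LinearMap.range A.mulVecLin ⊔ LinearMap.range B.mulVecLin : Submodule ℝ (α → ℝ)) :=
        Submodule.finrank_mono hle
    _ ≤ _ := Submodule.finrank_add_le_finrank_add_finrank _ _

lemma matrix_rank_sum_le {ι α β : Type*} [Fintype α] [Fintype β]
    (s : Finset ι) (f : ι → Matrix α β ℝ) :
    (∑ i ∈ s, f i).rank ≤ ∑ i ∈ s, (f i).rank := by
  classical
  induction s using Finset.induction with
  | empty => simp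
  | insert _ _ h ih =>
      rw [Finset.sum_insert h, Finset.sum_insert h]
      exact (matrix_rank_add_le _ _).trans (Nat.add_le_add_left ih _)

lemma matrix_rank_smul_le {α β : Type*} [Fintype α] [Fintype β] [DecidableEq α]
    (c : ℝ) (A : Matrix α β ℝ) : (c • A).rank ≤ A.rank := by
  have h : c • A = (c • (1 : Matrix α α ℝ)) * A := by
    rw [Matrix.smul_mul, Matrix.one_mul]
  rw [h]
  exact Matrix.rank_mul_le_right _ _

/-- The inclusion matrix from `k`-subsets to `j`-subsets. -/
def incMatrix (n k j : ℕ) :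
    Matrix {S : Finset (Fin n) // S.card = k} {U : Finset (Fin n) // U.card = j} ℝ :=
  Matrix.of fun S U => if U.1 ⊆ S.1 then 1 else 0

lemma incMatrix_entry {n k j : ℕ} (S T : {S : Finset (Fin n) // S.card = k}) :
    (incMatrix n k j * (incMatrix n k j)ᵀ) S T
      = (((S.1 ∩ T.1).card.choose j : ℕ) : ℝ) := by
  classical
  rw [Matrix.mul_apply]
  have h1 : ∀ U : {U : Finset (Fin n) // U.card = j},
      incMatrix n k j S U * (incMatrix n k j)ᵀ U T
        = if U.1 ⊆ S.1 ∩ T.1 then (1 : ℝ) else 0 := by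
    intro U
    rw [Matrix.transpose_apply]
    show (if U.1 ⊆ S.1 then (1:ℝ) else 0) * (if U.1 ⊆ T.1 then (1:ℝ) else 0) = _
    by_cases h1 : U.1 ⊆ S.1 <;> by_cases h2 : U.1 ⊆ T.1 <;>
      simp [h1, h2, Finset.subset_inter_iff]
  rw [Finset.sum_congr rfl fun U _ => h1 U]
  have h2 : ∑ U : {U : Finset (Fin n) // U.card = j},
      (if U.1 ⊆ S.1 ∩ T.1 then (1 : ℝ) else 0)
      = ∑ U ∈ (Finset.univ.filter fun U : Finset (Fin n) => U.card = j),
          (if U ⊆ S.1 ∩ T.1 then (1 : ℝ) else 0) :=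
    (Finset.sum_subtype (p := fun U : Finset (Fin n) => U.card = j)
      (Finset.univ.filter fun U : Finset (Fin n) => U.card = j)
      (by simp) (fun U => if U ⊆ S.1 ∩ T.1 then (1 : ℝ) else 0)).symm
  rw [h2, Finset.sum_boole, Finset.filter_filter]
  have h3 : (Finset.univ.filter fun U : Finset (Fin n) => U.card = j ∧ U ⊆ S.1 ∩ T.1)
      = (S.1 ∩ T.1).powersetCard j := by
    ext U
    simp [Finset.mem_powersetCard, and_comm]
  rw [h3, Finset.card_powersetCard]


end LowRankDisjAux

open LowRankDisjAux

open Matrix in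
theorem low_rank_frobenius_approximation_of_disjMatrix :
    ∃ (C : ℝ) (N : ℕ), 0 < C ∧
      ∀ (n : ℕ), N ≤ n → ∀ (ε : ℝ), 0 < ε → ε < 1 →
        ∃ M' : Matrix {S : Finset (Fin n) // S.card = Nat.sqrt n}
            {S : Finset (Fin n) // S.card = Nat.sqrt n} ℝ,
          M'.IsSymm ∧
          (M'.rank : ℝ) ≤ (n : ℝ) ^ (C * Real.log (1 / ε)) ∧
          (((disjMatrixNormalized n (Nat.sqrt n) - M')ᵀ *
              (disjMatrixNormalized n (Nat.sqrt n) - M')).trace ≤ 2 * ε) := by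
  classical
  refine ⟨200, 16, by norm_num, ?_⟩
  intro n hn ε hε0 hε1
  set k := Nat.sqrt n with hkdef
  have hkk : k * k ≤ n := Nat.sqrt_le n
  have hk4 : 4 ≤ k := Nat.le_sqrt.mpr (by omega)
  have hkn : k ≤ n := Nat.sqrt_le_self n
  have h2k : 2 * k ≤ n := by
    have : 2 * k ≤ k * k := Nat.mul_le_mul_right k (by omega)
    omega
  have hka : k ≤ n - k := by omega
  set D : ℕ := n.choose k * (n - k).choose k with hD
  have hD0 : 0 < D := Nat.mul_pos (Nat.choose_pos hkn) (Nat.choose_pos hka)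
  have hDR : (0 : ℝ) < (D : ℝ) := by exact_mod_cast hD0
  set c : ℝ := (1 : ℝ) / Real.sqrt ((n.choose k * (n - k).choose k : ℕ)) with hc
  have hc2 : c ^ 2 = 1 / (D : ℝ) := by
    rw [hc, div_pow, one_pow, hD]
    rw [Real.sq_sqrt (by positivity)]
  have hMent : ∀ S T : {S : Finset (Fin n) // S.card = k},
      disjMatrixNormalized n k S T = c * (if Disjoint S.1 T.1 then 1 else 0) := by
    intro S T
    simp [disjMatrixNormalized, disjMatrix, Matrix.smul_apply, smul_eq_mul, hc]
  have hL : 0 < Real.log (1 / ε) := Real.log_pos (by rw [lt_div_iff₀ hε0]; linarith)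
  set L := Real.log (1 / ε) with hLdef
  have hCN : (0 : ℝ) < (n.choose k : ℝ) := by exact_mod_cast Nat.choose_pos hkn
  have hCA : (0 : ℝ) < ((n - k).choose k : ℝ) := by exact_mod_cast Nat.choose_pos hka
  rcases le_or_gt (1 / 2 : ℝ) ε with hhalf | hhalf
  · -- take M' = 0
    refine ⟨0, Matrix.isSymm_zero, ?_, ?_⟩
    · rw [Matrix.rank_zero, Nat.cast_zero]
      exact Real.rpow_nonneg (by positivity) _
    · rw [sub_zero]
      have hf : ∀ S T : {S : Finset (Fin n) // S.card = k},
          (disjMatrixNormalized n k S T) ^ 2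
            = (fun m => if m = 0 then 1 / (D : ℝ) else 0) ((S.1 ∩ T.1).card) := by
        intro S T
        rw [hMent]
        by_cases hd : Disjoint S.1 T.1
        · have h0 : (S.1 ∩ T.1).card = 0 := by
            rw [Finset.card_eq_zero, ← Finset.disjoint_iff_inter_eq_empty]
            exact hd
          rw [if_pos hd, mul_one, hc2]
          simp [h0]
        · have h0 : ¬ (S.1 ∩ T.1).card = 0 := by
            rw [Finset.card_eq_zero, ← Finset.disjoint_iff_inter_eq_empty]
            exact hd
          rw [if_neg hd, mul_zero]
          simp [h0]
      rw [trace_formula _ (fun m => if m = 0 then 1 / (D : ℝ) else 0) hf]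
      have hsum : ∑ m ∈ Finset.range (k + 1),
          ((k.choose m * (n - k).choose (k - m) : ℕ) : ℝ) * (if m = 0 then 1 / (D : ℝ) else 0)
            = ((n - k).choose k : ℝ) * (1 / (D : ℝ)) := by
        rw [Finset.sum_eq_single 0]
        · simp
        · intro m _ hm
          simp [hm]
        · intro h
          exact absurd (Finset.mem_range.mpr (by omega)) h
      rw [hsum]
      have hone : (n.choose k : ℝ) * (((n - k).choose k : ℝ) * (1 / (D : ℝ))) = 1 := by
        rw [hD]
        push_cast
        field_simp
      rw [hone]
      linarith
  · -- real work
    have hlog2pos : (0 : ℝ) < Real.log 2 := Real.log_pos (by norm_num)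
    have hlog2 : Real.log 2 ≤ L := by
      rw [hLdef]
      apply Real.log_le_log (by norm_num)
      rw [le_div_iff₀ hε0]
      linarith
    set tc : ℕ := ⌈L / Real.log 2⌉₊ with htc
    set t : ℕ := 66 + tc with ht
    have ht16 : 16 ≤ t := by omega
    have htL : (t : ℝ) + 2 ≤ 200 * L := by
      have h1 : (tc : ℝ) ≤ L / Real.log 2 + 1 :=
        le_of_lt (Nat.ceil_lt_add_one (by positivity))
      have h2 : L / Real.log 2 ≤ 2 * L := by
        rw [div_le_iff₀ hlog2pos]
        nlinarith [Real.log_two_gt_d9, hL]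
      have h3 : (69 : ℝ) ≤ 100 * L := by
        nlinarith [Real.log_two_gt_d9, hlog2]
      have h4 : (t : ℝ) = 66 + tc := by rw [ht]; push_cast; ring
      linarith
    have htc_eps : ((1 : ℝ) / 2) ^ tc ≤ ε := by
      have h1 : L / Real.log 2 ≤ (tc : ℝ) := Nat.le_ceil _
      have h2 : ((1 : ℝ) / 2) ^ (tc : ℕ) = ((1 : ℝ) / 2) ^ ((tc : ℕ) : ℝ) :=
        (Real.rpow_natCast _ _).symm
      rw [h2]
      have h3 : ((1 : ℝ) / 2) ^ ((tc : ℕ) : ℝ) ≤ ((1 : ℝ) / 2) ^ (L / Real.log 2) :=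
        Real.rpow_le_rpow_of_exponent_ge (by norm_num) (by norm_num) h1
      refine h3.trans (le_of_eq ?_)
      rw [Real.rpow_def_of_pos (by norm_num : (0 : ℝ) < 1 / 2)]
      have hlog12 : Real.log (1 / 2) = -Real.log 2 := by
        rw [one_div, Real.log_inv]
      rw [hlog12]
      have h5 : -Real.log 2 * (L / Real.log 2) = -L := by
        field_simp
      rw [h5, hLdef, one_div, Real.log_inv, neg_neg, Real.exp_log hε0]
    rcases le_or_gt (t + 2) n with htn | htn
    · -- truncated expansion
      set M' : Matrix {S : Finset (Fin n) // S.card = k} {S : Finset (Fin n) // S.card = k} ℝ :=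
        c • ∑ j ∈ Finset.range (t + 1),
          ((-1 : ℝ) ^ j • (incMatrix n k j * (incMatrix n k j)ᵀ)) with hM'def
      refine ⟨M', ?_, ?_, ?_⟩
      · show M'ᵀ = M'
        rw [hM'def, Matrix.transpose_smul, Matrix.transpose_sum]
        congr 1
        refine Finset.sum_congr rfl fun j _ => ?_
        rw [Matrix.transpose_smul, Matrix.transpose_mul, Matrix.transpose_transpose]
      · -- rank bound
        have hr1 : M'.rank ≤ ∑ j ∈ Finset.range (t + 1),
            (incMatrix n k j * (incMatrix n k j)ᵀ).rank := by
          refine le_trans (matrix_rank_smul_le _ _) (le_trans (matrix_rank_sum_le _ _) ?_)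
          exact Finset.sum_le_sum fun j _ => matrix_rank_smul_le _ _
        have hr2 : ∀ j, (incMatrix n k j * (incMatrix n k j)ᵀ).rank ≤ n.choose j := by
          intro j
          refine le_trans (Matrix.rank_mul_le_left _ _)
            (le_trans (Matrix.rank_le_card_width _) ?_)
          rw [Fintype.card_finset_len, Fintype.card_fin]
        have hr3a : ∀ j ∈ Finset.range (t + 1),
            (incMatrix n k j * (incMatrix n k j)ᵀ).rank ≤ n ^ t := by
          intro j hj
          rw [Finset.mem_range] at hj
          exact le_trans (hr2 j) (le_trans (Nat.choose_le_pow n j)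
            (Nat.pow_le_pow_right (by omega) (by omega)))
        have hr3 : M'.rank ≤ (t + 1) * n ^ t := by
          refine hr1.trans (le_trans (Finset.sum_le_sum hr3a) ?_)
          rw [Finset.sum_const, Finset.card_range, smul_eq_mul]
        have hr4 : M'.rank ≤ n ^ (t + 2) := by
          calc M'.rank ≤ (t + 1) * n ^ t := hr3
            _ ≤ n * n ^ t := Nat.mul_le_mul_right _ (by omega)
            _ = n ^ (t + 1) := by rw [pow_succ, Nat.mul_comm]
            _ ≤ n ^ (t + 2) := Nat.pow_le_pow_right (by omega) (by omega)
        calc (M'.rank : ℝ) ≤ ((n ^ (t + 2) : ℕ) : ℝ) := by exact_mod_cast hr4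
          _ = (n : ℝ) ^ (((t + 2 : ℕ)) : ℝ) := by
              rw [Real.rpow_natCast]
              push_cast
              ring
          _ ≤ (n : ℝ) ^ (200 * L) := by
              apply Real.rpow_le_rpow_of_exponent_le (by exact_mod_cast (by omega : 1 ≤ n))
              push_cast
              linarith
      · -- trace bound
        set g : ℕ → ℝ := fun m => if m = 0 then 0 else (((m - 1).choose t : ℕ) : ℝ) ^ 2 with hg
        have scalar : ∀ m : ℕ,
            (c * ((if m = 0 then (1 : ℝ) else 0)
              - ∑ j ∈ Finset.range (t + 1), (-1 : ℝ) ^ j * ((m.choose j : ℕ) : ℝ))) ^ 2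
              = (1 / (D : ℝ)) * g m := by
          intro m
          cases m with
          | zero =>
              rw [alt_sum_zero]
              simp [hg]
          | succ m' =>
              rw [alt_sum_succ]
              have hne : ¬ (m' + 1 = 0) := Nat.succ_ne_zero m'
              have hsq : ((-1 : ℝ) ^ t) ^ 2 = 1 := by
                rw [← pow_mul, mul_comm, pow_mul]
                norm_num
              have hstep : (c * ((0 : ℝ) - (-1) ^ t * ((m'.choose t : ℕ) : ℝ))) ^ 2
                  = c ^ 2 * (((-1 : ℝ) ^ t) ^ 2 * ((m'.choose t : ℕ) : ℝ) ^ 2) := by ring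
              rw [if_neg hne, hstep, hsq, one_mul, hc2, hg]
              simp only [if_neg hne, Nat.succ_sub_one]
        have hent : ∀ S T : {S : Finset (Fin n) // S.card = k},
            ((disjMatrixNormalized n k - M') S T) ^ 2
              = (fun m => (1 / (D : ℝ)) * g m) ((S.1 ∩ T.1).card) := by
          intro S T
          have hM'ent : M' S T = c * ∑ j ∈ Finset.range (t + 1),
              (-1 : ℝ) ^ j * ((((S.1 ∩ T.1).card.choose j : ℕ)) : ℝ) := by
            rw [hM'def, Matrix.smul_apply, smul_eq_mul]
            congr 1
            rw [Matrix.sum_apply]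
            refine Finset.sum_congr rfl fun j _ => ?_
            rw [Matrix.smul_apply, smul_eq_mul, incMatrix_entry]
          have hiff : Disjoint S.1 T.1 ↔ (S.1 ∩ T.1).card = 0 := by
            rw [Finset.card_eq_zero, Finset.disjoint_iff_inter_eq_empty]
          have hEST : (disjMatrixNormalized n k - M') S T
              = c * ((if (S.1 ∩ T.1).card = 0 then (1 : ℝ) else 0)
                - ∑ j ∈ Finset.range (t + 1),
                    (-1 : ℝ) ^ j * ((((S.1 ∩ T.1).card.choose j : ℕ)) : ℝ)) := by
            rw [Matrix.sub_apply, hMent, hM'ent, if_congr hiff rfl rfl]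
            ring
          rw [hEST, scalar]
        rw [trace_formula _ (fun m => (1 / (D : ℝ)) * g m) hent]
        have hterm : ∀ m ∈ Finset.range (k + 1),
            ((k.choose m * (n - k).choose (k - m) : ℕ) : ℝ) * ((1 / (D : ℝ)) * g m)
              ≤ (n.choose k : ℝ)⁻¹ * 2 ^ 64 * (if m ≤ t then 0 else (1 / 2) ^ m) := by
          intro m hm
          rw [Finset.mem_range] at hm
          by_cases hmt : m ≤ t
          · have hg0 : g m = 0 := by
              rcases Nat.eq_zero_or_pos m with h0 | hpos
              · simp [hg, h0]
              · have hlt : m - 1 < t := by omega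
                have hne : ¬ m = 0 := by omega
                simp [hg, hne, Nat.choose_eq_zero_of_lt hlt]
            rw [hg0, if_pos hmt]
            simp
          · have hmt' : t + 1 ≤ m := by omega
            have hm0 : ¬ m = 0 := by omega
            have hcore := core_nat hkk hk4 (by omega : m ≤ k) hmt' ht16
            have hcore' : ((k.choose m : ℕ) : ℝ) * (((n - k).choose (k - m) : ℕ) : ℝ)
                * (((m - 1).choose t : ℕ) : ℝ) ^ 2 * (2 : ℝ) ^ m
                ≤ (((n - k).choose k : ℕ) : ℝ) * 2 ^ 64 := by
              exact_mod_cast hcore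
            rw [if_neg hmt, hg]
            simp only [if_neg hm0]
            rw [hD]
            push_cast
            have h2m : (0 : ℝ) < (2 : ℝ) ^ m := by positivity
            have e1 : ((k.choose m : ℕ) : ℝ) * (((n - k).choose (k - m) : ℕ) : ℝ)
                * (1 / (((n.choose k : ℕ) : ℝ) * (((n - k).choose k : ℕ) : ℝ))
                    * (((m - 1).choose t : ℕ) : ℝ) ^ 2)
                = (((k.choose m : ℕ) : ℝ) * (((n - k).choose (k - m) : ℕ) : ℝ)
                    * (((m - 1).choose t : ℕ) : ℝ) ^ 2 * (2 : ℝ) ^ m)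
                  / (((n.choose k : ℕ) : ℝ) * (((n - k).choose k : ℕ) : ℝ) * (2 : ℝ) ^ m) := by
              field_simp
            have e2 : (((n.choose k : ℕ) : ℝ))⁻¹ * 2 ^ 64 * ((1 : ℝ) / 2) ^ m
                = ((((n - k).choose k : ℕ) : ℝ) * 2 ^ 64)
                  / (((n.choose k : ℕ) : ℝ) * (((n - k).choose k : ℕ) : ℝ) * (2 : ℝ) ^ m) := by
              rw [div_pow, one_pow]
              field_simp
            rw [e1, e2]
            exact div_le_div_of_nonneg_right hcore' (by positivity)
        have hsum_le : ∑ m ∈ Finset.range (k + 1),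
            ((k.choose m * (n - k).choose (k - m) : ℕ) : ℝ) * ((1 / (D : ℝ)) * g m)
              ≤ (n.choose k : ℝ)⁻¹ * 2 ^ 64
                * ∑ m ∈ Finset.range (k + 1), (if m ≤ t then (0 : ℝ) else (1 / 2) ^ m) := by
          rw [Finset.mul_sum]
          exact Finset.sum_le_sum hterm
        refine le_trans (mul_le_mul_of_nonneg_left hsum_le hCN.le) ?_
        rw [← mul_assoc, ← mul_assoc, mul_inv_cancel₀ hCN.ne', one_mul]
        refine le_trans (mul_le_mul_of_nonneg_left (tail_sum (k + 1) t) (by positivity)) ?_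
        have hq : ((1 : ℝ) / 2) ^ t = (1 / 2) ^ 66 * (1 / 2) ^ tc := by rw [ht, pow_add]
        rw [hq]
        have h14 : (2 : ℝ) ^ 64 * ((1 / 2 : ℝ) ^ 66) = 1 / 4 := by norm_num
        calc (2 : ℝ) ^ 64 * ((1 / 2) ^ 66 * (1 / 2) ^ tc)
            = ((2 : ℝ) ^ 64 * (1 / 2) ^ 66) * (1 / 2) ^ tc := by ring
          _ = (1 / 4) * (1 / 2) ^ tc := by rw [h14]
          _ ≤ (1 / 4) * ε := mul_le_mul_of_nonneg_left htc_eps (by norm_num)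
          _ ≤ 2 * ε := by linarith
    · -- M' = the matrix itself
      refine ⟨disjMatrixNormalized n k, ?_, ?_, ?_⟩
      · show (disjMatrixNormalized n k)ᵀ = disjMatrixNormalized n k
        ext S T
        rw [Matrix.transpose_apply, hMent, hMent]
        exact congrArg (fun x => c * x) (if_congr disjoint_comm rfl rfl)
      · have hr : (disjMatrixNormalized n k).rank ≤ n.choose k :=
          le_trans (Matrix.rank_le_card_width _)
            (by rw [Fintype.card_finset_len, Fintype.card_fin])
        have hr2 : (disjMatrixNormalized n k).rank ≤ n ^ k :=
          le_trans hr (Nat.choose_le_pow n k)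
        have hkt : (k : ℝ) ≤ 200 * L := by
          have : k ≤ t + 1 := by omega
          have h5 : (k : ℝ) ≤ (t : ℝ) + 1 := by exact_mod_cast this
          linarith
        calc ((disjMatrixNormalized n k).rank : ℝ) ≤ ((n ^ k : ℕ) : ℝ) := by exact_mod_cast hr2
          _ = (n : ℝ) ^ ((k : ℕ) : ℝ) := by rw [Real.rpow_natCast]; push_cast; ring
          _ ≤ (n : ℝ) ^ (200 * L) := by
              apply Real.rpow_le_rpow_of_exponent_le (by exact_mod_cast (by omega : 1 ≤ n))
              exact hkt
      · rw [sub_self]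
        simp only [Matrix.transpose_zero, Matrix.mul_zero, Matrix.trace_zero]
        linarith
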